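/- Let y : ℝ → ℝ be continuous, twice continuously differentiable on (0,∞) and on (−∞,0), even (y(−x) = y(x)), satisfying −y''(x) + |x|·y(x) = λ·y(x) for all x ≠ 0, and with right derivative at 0 equal to 0. If moreover y restricted to (0,∞) is of the form y(x) = c₁·A(x−λ) + c₂·B(x−λ) where A, B are two solutions of the Airy equation f'' = z f with B unbounded and A → 0 at +∞, and y ∈ L¹(ℝ), y not identically 0, then c₂ = 0 and A'(−λ) = 0. -/

import Mathlib

open Real Filter Set MeasureTheory

theorem even_eigenfunction_characterization
    (A A' B B' : ℝ → ℝ)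
    (hA : ∀ z, HasDerivAt A (A' z) z) (hA' : ∀ z, HasDerivAt A' (z * A z) z)
    (hB : ∀ z, HasDerivAt B (B' z) z) (hB' : ∀ z, HasDerivAt B' (z * B z) z)
    (hAtop : Filter.Tendsto A atTop (nhds 0))
    (hAint : IntegrableOn A (Ici 0))
    (hBtop : Filter.Tendsto B atTop atTop)
    (lam : ℝ) (hlam : 0 < lam)
    (y : ℝ → ℝ) (c₁ c₂ : ℝ)
    (hycont : Continuous y)
    (hyC2 : ContDiffOn ℝ 2 y (Ioi 0) ∧ ContDiffOn ℝ 2 y (Iio 0))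
    (hyeven : ∀ x, y (-x) = y x)
    (hyeq : ∀ x ≠ 0, -(deriv (deriv y)) x + |x| * y x = lam * y x)
    (hyderiv0 : derivWithin y (Ici 0) 0 = 0)
    (hyform : ∀ x > 0, y x = c₁ * A (x - lam) + c₂ * B (x - lam))
    (hyL1 : Integrable y)
    (hynz : y ≠ 0) :
    c₂ = 0 ∧ A' (-lam) = 0 := by
  have hsub : Tendsto (fun x : ℝ => x - lam) atTop atTop :=
    tendsto_atTop_add_const_right _ (-lam) tendsto_id
  -- Step 1: c₂ = 0
  have hc2 : c₂ = 0 := by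
    by_contra hc2
    have hc2' : 0 < |c₂| := abs_pos.mpr hc2
    have hBabs : Tendsto (fun x => |c₂| * |B (x - lam)|) atTop atTop :=
      (tendsto_abs_atTop_atTop.comp (hBtop.comp hsub)).const_mul_atTop hc2'
    have hAabs : Tendsto (fun x => -|c₁ * A (x - lam)|) atTop (nhds (-|c₁ * 0|)) := by
      exact (((hAtop.comp hsub).const_mul c₁).abs).neg
    have hAev : ∀ᶠ x in atTop, (-1:ℝ) ≤ -|c₁ * A (x - lam)| :=
      hAabs.eventually (eventually_ge_nhds (by norm_num))
    have hlow : Tendsto (fun x => |c₂| * |B (x - lam)| - |c₁ * A (x - lam)|) atTop atTop := by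
      simpa [sub_eq_add_neg] using tendsto_atTop_add_right_of_le' atTop (-1 : ℝ) hBabs hAev
    have habsy : Tendsto (fun x => |y x|) atTop atTop := by
      apply tendsto_atTop_mono' _ _ hlow
      filter_upwards [eventually_gt_atTop (0:ℝ)] with x hx
      have h := hyform x hx
      have : |c₂ * B (x - lam)| - |c₁ * A (x - lam)| ≤ |y x| := by
        have : |c₂ * B (x - lam)| ≤ |y x| + |c₁ * A (x - lam)| := by
          calc |c₂ * B (x - lam)| = |y x - c₁ * A (x - lam)| := by rw [h]; ring_nf
          _ ≤ |y x| + |c₁ * A (x - lam)| := abs_sub _ _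
        linarith
      simpa [abs_mul] using this
    obtain ⟨N, hN⟩ := (habsy.eventually_ge_atTop 1).exists_forall_of_atTop
    have h1 : IntegrableOn (fun _ : ℝ => (1:ℝ)) (Ici N) := by
      apply (hyL1.integrableOn (s := Ici N)).abs.mono' (by measurability)
      filter_upwards [ae_restrict_mem measurableSet_Ici] with x hx
      simpa using hN x hx
    rw [integrableOn_const_iff (C := (1:ℝ)), enorm_one] at h1
    rcases h1 with h | h
    · exact one_ne_zero h
    · simp [Real.volume_Ici] at h
  -- the smooth extension g
  set g : ℝ → ℝ := fun x => c₁ * A (x - lam) + c₂ * B (x - lam) with hg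
  have hgderiv : ∀ x : ℝ, HasDerivAt g (c₁ * A' (x - lam) + c₂ * B' (x - lam)) x := by
    intro x
    have h1 : HasDerivAt (fun x : ℝ => A (x - lam)) (A' (x - lam)) x := by
      simpa [Function.comp_def] using (hA (x - lam)).comp x ((hasDerivAt_id x).sub_const lam)
    have h2 : HasDerivAt (fun x : ℝ => B (x - lam)) (B' (x - lam)) x := by
      simpa [Function.comp_def] using (hB (x - lam)).comp x ((hasDerivAt_id x).sub_const lam)
    exact (h1.const_mul c₁).add (h2.const_mul c₂)
  have hgcont : Continuous g := by
    have := fun x => (hgderiv x).differentiableAt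
    exact (Differentiable.continuous this)
  -- y = g at 0, hence on Ici 0
  have hy0 : y 0 = g 0 := by
    have h1 : Tendsto y (nhdsWithin 0 (Ioi 0)) (nhds (y 0)) :=
      (hycont.tendsto 0).mono_left nhdsWithin_le_nhds
    have h2 : Tendsto y (nhdsWithin 0 (Ioi 0)) (nhds (g 0)) := by
      apply Tendsto.congr' _ ((hgcont.tendsto 0).mono_left nhdsWithin_le_nhds)
      filter_upwards [self_mem_nhdsWithin] with x hx
      exact (hyform x hx).symm
    exact tendsto_nhds_unique h1 h2
  have heq : EqOn y g (Ici 0) := by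
    intro x hx
    rcases eq_or_lt_of_le (mem_Ici.mp hx : (0:ℝ) ≤ x) with h | h
    · rw [← h]; exact hy0
    · exact hyform x h
  have hd : derivWithin y (Ici 0) 0 = c₁ * A' (-lam) + c₂ * B' (-lam) := by
    rw [derivWithin_congr heq hy0]
    have := ((hgderiv 0).hasDerivWithinAt (s := Ici 0)).derivWithin (uniqueDiffOn_Ici 0 0 (by simp))
    simpa using this
  have hc1 : c₁ ≠ 0 := by
    intro hc1
    apply hynz
    funext x
    have hpos : ∀ x > 0, y x = 0 := by
      intro x hx; rw [hyform x hx, hc1, hc2]; ring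
    rcases lt_trichotomy x 0 with h | h | h
    · have := hpos (-x) (by linarith)
      rw [hyeven x] at this; exact this
    · rw [h, hy0, hg, hc1, hc2]; simp
    · exact hpos x h
  refine ⟨hc2, ?_⟩
  rw [hyderiv0, hc2] at hd
  field_simp at hd
  simpa [hc1] using hd.symm
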